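/- Let D be a finitely generated abelian group, S a noetherian D-graded ring, and D' ⊆ D a subgroup. Then the Veronese subring S_{D'} = ⊕_{d∈D'} S_d satisfies the ascending chain condition on homogeneous ideals; in particular S_{D'} is noetherian. -/

import Mathlib

/-- The Veronese subring `S_{D'} = ⊕_{d ∈ D'} S_d` of a `D`-graded ring, for a subgroup
`D' ⊆ D`: since `D'` is closed under addition, this is the subring generated by the
homogeneous pieces of degrees in `D'`. -/
def veroneseSubgroupSubring {D S : Type*} [AddCommGroup D] [CommRing S]
    (𝒜 : D → AddSubgroup S) (D' : AddSubgroup D) : Subring S :=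
  Subring.closure (⋃ d ∈ D', (𝒜 d : Set S))

set_option linter.unusedSectionVars false

namespace VeroneseAux

open DirectSum
open scoped Classical

variable {D S : Type*} [AddCommGroup D] [DecidableEq D] [CommRing S]
  (𝒜 : D → AddSubgroup S) [GradedRing 𝒜] (D' : AddSubgroup D)

/-- The projection of `S` onto the degrees in `D'`. -/
noncomputable def proj : S →+ S :=
  (DFinsupp.sumAddHom fun d => if d ∈ D' then (𝒜 d).subtype else 0).comp
    (DirectSum.decomposeAddEquiv 𝒜).toAddMonoidHom

lemma proj_coe {d : D} (x : 𝒜 d) :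
    proj 𝒜 D' (x : S) = if d ∈ D' then (x : S) else 0 := by
  have h0 : proj 𝒜 D' (x : S) =
      (DFinsupp.sumAddHom fun d => if d ∈ D' then (𝒜 d).subtype else 0)
        (DirectSum.decompose 𝒜 (x : S)) := rfl
  rw [h0, DirectSum.decompose_coe]
  erw [DFinsupp.sumAddHom_single]
  split_ifs <;> simp

lemma subset_veronese {d : D} (hd : d ∈ D') :
    (𝒜 d : Set S) ⊆ (veroneseSubgroupSubring 𝒜 D' : Set S) := by
  intro x hx
  exact Subring.subset_closure (Set.mem_biUnion hd hx)

lemma proj_mem (s : S) : proj 𝒜 D' s ∈ veroneseSubgroupSubring 𝒜 D' := by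
  induction s using DirectSum.Decomposition.inductionOn 𝒜 with
  | zero => rw [map_zero]; exact zero_mem _
  | @homogeneous d x =>
      rw [proj_coe]
      split_ifs with h
      · exact subset_veronese 𝒜 D' h x.2
      · exact zero_mem _
  | add x y hx hy => rw [map_add]; exact add_mem hx hy

lemma proj_mul {r : S} (hr : r ∈ veroneseSubgroupSubring 𝒜 D') :
    ∀ s, proj 𝒜 D' (s * r) = proj 𝒜 D' s * r := by
  induction hr using Subring.closure_induction with
  | mem x hx =>
      intro s
      obtain ⟨_, ⟨d, rfl⟩, hx⟩ := hx
      obtain ⟨_, ⟨hd, rfl⟩, hx⟩ := hx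
      induction s using DirectSum.Decomposition.inductionOn 𝒜 with
      | zero => simp
      | @homogeneous e y =>
          have hxy : (y : S) * x ∈ 𝒜 (e + d) :=
            SetLike.mul_mem_graded y.2 hx
          rw [show ((y : S) * x) = ((⟨_, hxy⟩ : 𝒜 (e + d)) : S) from rfl,
            proj_coe, proj_coe]
          have : e + d ∈ D' ↔ e ∈ D' := by
            constructor
            · intro h
              simpa using AddSubgroup.sub_mem D' h hd
            · intro h; exact AddSubgroup.add_mem D' h hd
          split_ifs with h1 h2
          · rfl
          · exact absurd (this.mp h1) h2
          · exact absurd (this.mpr ‹_›) h1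
          · simp
      | add a b ha hb => rw [add_mul, map_add, map_add, ha, hb, add_mul]
  | zero => intro s; simp
  | one => intro s; simp
  | add x y _ _ hx hy => intro s; rw [mul_add, map_add, hx, hy, mul_add]
  | neg x _ hx => intro s; rw [mul_neg, map_neg, hx, mul_neg]
  | mul x y _ _ hx hy => intro s; rw [← mul_assoc, hy, hx, mul_assoc]

lemma proj_one : proj 𝒜 D' (1 : S) = 1 := by
  have h1 : (1 : S) ∈ 𝒜 0 := SetLike.one_mem_graded 𝒜
  rw [show (1 : S) = ((⟨1, h1⟩ : 𝒜 0) : S) from rfl, proj_coe,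
    if_pos D'.zero_mem]

lemma proj_fix {r : S} (hr : r ∈ veroneseSubgroupSubring 𝒜 D') :
    proj 𝒜 D' r = r := by
  rw [← one_mul r, proj_mul 𝒜 D' hr 1, proj_one, one_mul]


lemma mem_of_map {I : Ideal (veroneseSubgroupSubring 𝒜 D')}
    {x : veroneseSubgroupSubring 𝒜 D'}
    (hx : (x : S) ∈ I.map (Subring.subtype (veroneseSubgroupSubring 𝒜 D'))) :
    x ∈ I := by
  rw [Ideal.map, Ideal.span, Submodule.mem_span_set'] at hx
  obtain ⟨n, a, g, hsum⟩ := hx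
  choose c hc hc' using fun i => (g i).2
  have hx2 : x = ∑ i, (⟨proj 𝒜 D' (a i), proj_mem 𝒜 D' (a i)⟩ *
      c i : veroneseSubgroupSubring 𝒜 D') := by
    apply Subtype.ext
    push_cast
    simp only [Subring.coe_subtype] at hc'
    rw [← proj_fix 𝒜 D' x.2, ← hsum, map_sum]
    refine Finset.sum_congr rfl fun i _ => ?_
    rw [smul_eq_mul, ← hc' i]
    exact proj_mul 𝒜 D' (c i).2 (a i)
  rw [hx2]
  exact Ideal.sum_mem I fun i _ => Ideal.mul_mem_left I _ (hc i)

lemma noeth [IsNoetherianRing S] :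
    IsNoetherianRing (veroneseSubgroupSubring 𝒜 D') := by
  rw [isNoetherianRing_iff, ← monotone_stabilizes_iff_noetherian]
  intro f
  obtain ⟨n, hn⟩ := monotone_stabilizes_iff_noetherian.mpr
    (inferInstance : IsNoetherian S S)
    ⟨fun m => Ideal.map (Subring.subtype (veroneseSubgroupSubring 𝒜 D')) (f m),
      fun a b h => Ideal.map_mono (f.mono h)⟩
  refine ⟨n, fun m hm => le_antisymm (f.mono hm) fun x hx => ?_⟩
  exact mem_of_map 𝒜 D' (by
    have := hn m hm
    change Ideal.map (Subring.subtype _) (f n) = Ideal.map (Subring.subtype _) (f m) at this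
    rw [this]
    exact Ideal.mem_map_of_mem _ hx)

end VeroneseAux

/-- If `S` is a noetherian ring graded by a finitely generated abelian group
`D` and `D' ⊆ D` is a subgroup, then the Veronese subring `S_{D'}` satisfies the ascending
chain condition on homogeneous ideals (ideals generated by homogeneous elements), and in
particular `S_{D'}` is noetherian. -/
theorem stmt_2 {D S : Type*} [AddCommGroup D] [AddGroup.FG D] [DecidableEq D]
    [CommRing S] (𝒜 : D → AddSubgroup S) [GradedRing 𝒜] [IsNoetherianRing S]
    (D' : AddSubgroup D) :
    (∀ c : ℕ → Ideal (veroneseSubgroupSubring 𝒜 D'),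
      (∀ n, ∃ gen : Set (veroneseSubgroupSubring 𝒜 D'),
        (∀ x ∈ gen, ∃ d ∈ D', (x : S) ∈ 𝒜 d) ∧ c n = Ideal.span gen) →
      Monotone c → ∃ n, ∀ m, n ≤ m → c m = c n)
    ∧ IsNoetherianRing (veroneseSubgroupSubring 𝒜 D') := by
  have hn := VeroneseAux.noeth 𝒜 D'
  refine ⟨fun c _ hmono => ?_, hn⟩
  obtain ⟨n, h⟩ := monotone_stabilizes_iff_noetherian.mpr
    (isNoetherianRing_iff.mp hn) ⟨c, hmono⟩
  exact ⟨n, fun m hm => (h m hm).symm⟩
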